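/- Let G be a finite transitive permutation group with point stabiliser H, let p be a prime dividing |H|, and let P be a Sylow p-subgroup of H. Then all subdegrees of G are coprime to p if and only if G admits the triple factorization G = H·N_G(P)·H. -/

import Mathlib

open Subgroup MulAction Pointwise
section Aux

lemma aux_finite_sylow {X : Type*} [Group X] [Finite X] {p : ℕ} : Finite (Sylow p X) :=
  Finite.of_injective (fun S : Sylow p X => (S : Subgroup X))
    (fun _ _ h => Sylow.ext h)

lemma aux_exists_sylow_le {X : Type*} [Group X] [Finite X] {p : ℕ} [Fact p.Prime]
    (K : Subgroup X) (h : ¬ p ∣ K.index) :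
    ∃ S : Sylow p X, (S : Subgroup X) ≤ K := by
  haveI := aux_finite_sylow (X := X) (p := p)
  have T : Sylow p ↥K := default
  have hQK : ((T : Subgroup ↥K).map K.subtype) ≤ K := Subgroup.map_subtype_le _
  have hsub : ((T : Subgroup ↥K).map K.subtype).subgroupOf K = (T : Subgroup ↥K) :=
    Subgroup.comap_map_eq_self_of_injective K.subtype_injective _
  have hidx : ¬ p ∣ ((T : Subgroup ↥K).map K.subtype).index := by
    rw [← Subgroup.relIndex_mul_index hQK, Subgroup.relIndex, hsub]
    exact (Fact.out : p.Prime).not_dvd_mul T.not_dvd_index h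
  exact ⟨(T.2.map K.subtype).toSylow hidx, hQK⟩

lemma aux_mem_normalizer {X : Type*} [Group X] {x : X} {P : Subgroup X}
    (h : MulAut.conj x • P = P) : x ∈ Subgroup.normalizer (P : Set X) := by
  rw [Subgroup.mem_normalizer_iff]
  intro u
  constructor
  · intro hu
    have := Subgroup.smul_mem_pointwise_smul u (MulAut.conj x) P hu
    rwa [h] at this
  · intro hu
    rw [← h, Subgroup.mem_pointwise_smul_iff_inv_smul_mem] at hu
    simpa [MulAut.smul_def, mul_assoc, inv_mul_cancel_left, mul_inv_cancel_left] using hu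

lemma aux_index_eq_of_card_eq {X : Type*} [Group X] [Finite X] {A B : Subgroup X}
    (h : Nat.card A = Nat.card B) : A.index = B.index := by
  have hA := Subgroup.card_mul_index A
  have hB := Subgroup.card_mul_index B
  rw [h] at hA
  exact Nat.eq_of_mul_eq_mul_left Nat.card_pos (hA.trans hB.symm)

lemma aux_pgroup_subgroupOf {X : Type*} [Group X] {p : ℕ} {N H : Subgroup X}
    (hN : IsPGroup p N) : IsPGroup p (N.subgroupOf H) :=
  hN.comap_of_injective H.subtype H.subtype_injective

def IsSylowIn' {G : Type*} [Group G] (p : ℕ) (S H : Subgroup G) : Prop :=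
  S ≤ H ∧ IsPGroup p S ∧ ∀ Q : Subgroup G, Q ≤ H → IsPGroup p Q → S ≤ Q → Q = S

/-- From `IsSylowIn`, build a `Sylow p ↥H`. -/
def aux_toSylow {G : Type*} [Group G] {p : ℕ} {P H : Subgroup G}
    (hP : IsSylowIn' p P H) : Sylow p ↥H where
  toSubgroup := P.subgroupOf H
  isPGroup' := aux_pgroup_subgroupOf hP.2.1
  is_maximal' := by
    intro Q hQ hle
    have h3 : P ≤ Q.map H.subtype := by
      have : (P.subgroupOf H).map H.subtype ≤ Q.map H.subtype := Subgroup.map_mono hle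
      rwa [Subgroup.subgroupOf_map_subtype, inf_eq_left.mpr hP.1] at this
    have h4 : Q.map H.subtype = P :=
      hP.2.2 _ (Subgroup.map_subtype_le Q) (hQ.map _) h3
    have := Subgroup.comap_map_eq_self_of_injective H.subtype_injective Q
    rw [h4] at this
    exact this.symm

lemma aux_card_conj_smul {X : Type*} [Group X] (c : X) (P : Subgroup X) :
    Nat.card (MulAut.conj c • P : Subgroup X) = Nat.card P :=
  (Nat.card_congr (Subgroup.equivSMul (MulAut.conj c) P).toEquiv).symm

lemma aux_card_subgroupOf {X : Type*} [Group X] {N H : Subgroup X} (h : N ≤ H) :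
    Nat.card (N.subgroupOf H) = Nat.card N :=
  Nat.card_congr (Subgroup.subgroupOfEquivOfLe h).toEquiv

end Aux

/-- `S` is a Sylow `p`-subgroup of the subgroup `H` of `G`. -/
def IsSylowIn {G : Type*} [Group G] (p : ℕ) (S H : Subgroup G) : Prop :=
  S ≤ H ∧ IsPGroup p S ∧ ∀ Q : Subgroup G, Q ≤ H → IsPGroup p Q → S ≤ Q → Q = S

/-- Triple factorization criterion: for a finite transitive group `G` with point
stabiliser `H`, a prime `p` dividing `|H|` and `P` a Sylow `p`-subgroup of `H`,
all subdegrees of `G` are coprime to `p` iff `G = H·N_G(P)·H`. -/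
theorem stmt15 {G Ω : Type*} [Group G] [Finite G] [Finite Ω] [MulAction G Ω]
    [FaithfulSMul G Ω] (htrans : MulAction.IsPretransitive G Ω) (α : Ω)
    (p : ℕ) (hp : p.Prime) (hpH : p ∣ Nat.card (MulAction.stabilizer G α))
    (P : Subgroup G) (hP : IsSylowIn p P (MulAction.stabilizer G α)) :
    (∀ β : Ω, Nat.Coprime p (Nat.card (MulAction.orbit (MulAction.stabilizer G α) β))) ↔
    (∀ g : G, ∃ h₁ ∈ MulAction.stabilizer G α, ∃ x ∈ Subgroup.normalizer (P : Set G),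
      ∃ h₂ ∈ MulAction.stabilizer G α, g = h₁ * x * h₂) := by
  classical
  haveI : Fact p.Prime := ⟨hp⟩
  set H := MulAction.stabilizer G α with hHdef
  haveI : Finite (Sylow p ↥H) := aux_finite_sylow
  have hP' : IsSylowIn' p P H := hP
  set SylP : Sylow p ↥H := aux_toSylow hP' with hSylPdef
  have hSylP : (SylP : Subgroup ↥H) = P.subgroupOf H := rfl
  constructor
  · -- coprime subdegrees → triple factorization
    intro hcop g
    set β := g • α with hβ
    have hKidx : ¬ p ∣ (MulAction.stabilizer ↥H β).index := by
      rw [MulAction.index_stabilizer, ← Nat.card_coe_set_eq]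
      exact (hp.coprime_iff_not_dvd).mp (hcop β)
    obtain ⟨S, hSK⟩ := aux_exists_sylow_le _ hKidx
    obtain ⟨h₁', hS⟩ := MulAction.exists_smul_eq ↥H SylP S
    have hfix : ∀ v ∈ P, ((h₁' : G) * v * (h₁' : G)⁻¹) • β = β := by
      intro v hv
      have hvH : v ∈ H := hP.1 hv
      have hwH : (h₁' : G) * v * (h₁' : G)⁻¹ ∈ H :=
        H.mul_mem (H.mul_mem h₁'.2 hvH) (H.inv_mem h₁'.2)
      have hmem : (⟨_, hwH⟩ : ↥H) ∈ (S : Subgroup ↥H) := by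
        rw [← hS]
        show _ ∈ (MulAut.conj h₁' • (SylP : Subgroup ↥H) : Subgroup ↥H)
        refine Subgroup.mem_smul_pointwise_iff_exists _ _ _ |>.mpr
          ⟨⟨v, hvH⟩, hv, ?_⟩
        rfl
      have := hSK hmem
      rw [MulAction.mem_stabilizer_iff, Subgroup.smul_def] at this
      exact this
    set c : G := g⁻¹ * (h₁' : G) with hc
    have hP₂H : (MulAut.conj c • P : Subgroup G) ≤ H := by
      rintro - ⟨v, hv, rfl⟩
      show (c * v * c⁻¹) • α = α
      have e1 : c * v * c⁻¹ = g⁻¹ * (((h₁' : G) * v * (h₁' : G)⁻¹) * g) := by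
        rw [hc]; group
      rw [e1, mul_smul, mul_smul]
      rw [show g • α = β from rfl, hfix v hv, hβ, inv_smul_smul]
    have hP₂pg : IsPGroup p ((MulAut.conj c • P : Subgroup G)) := by
      rw [Subgroup.pointwise_smul_def]
      exact hP.2.1.map _
    have hcard : Nat.card ((MulAut.conj c • P : Subgroup G).subgroupOf H)
        = Nat.card (SylP : Subgroup ↥H) := by
      rw [aux_card_subgroupOf hP₂H, aux_card_conj_smul, hSylP, aux_card_subgroupOf hP.1]
    have hidx₂ : ¬ p ∣ ((MulAut.conj c • P : Subgroup G).subgroupOf H).index := by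
      rw [aux_index_eq_of_card_eq hcard]
      exact SylP.not_dvd_index
    obtain ⟨h₂', hS₂⟩ := MulAction.exists_smul_eq ↥H SylP
      ((aux_pgroup_subgroupOf hP₂pg).toSylow hidx₂)
    have hmap : MulAut.conj (h₂' : G) • P = MulAut.conj c • P := by
      have h6 := congrArg (fun S : Sylow p ↥H => ((S : Subgroup ↥H).map H.subtype)) hS₂
      rw [show ((h₂' • SylP : Sylow p ↥H) : Subgroup ↥H)
            = MulAut.conj h₂' • (SylP : Subgroup ↥H) from rfl, hSylP,
          Subgroup.conj_smul_subgroupOf hP.1,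
          show (((aux_pgroup_subgroupOf hP₂pg).toSylow hidx₂ : Sylow p ↥H) : Subgroup ↥H)
            = (MulAut.conj c • P : Subgroup G).subgroupOf H from rfl,
          Subgroup.subgroupOf_map_subtype, Subgroup.subgroupOf_map_subtype,
          inf_eq_left.mpr (Subgroup.conj_smul_le_of_le hP.1 h₂'),
          inf_eq_left.mpr hP₂H] at h6
      exact h6
    have hxP : MulAut.conj ((h₁' : G)⁻¹ * g * (h₂' : G)) • P = P := by
      rw [map_mul, mul_smul, hmap, ← mul_smul, ← map_mul, hc]
      rw [show (h₁' : G)⁻¹ * g * (g⁻¹ * (h₁' : G)) = 1 by group, map_one, one_smul]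
    refine ⟨(h₁' : G), h₁'.2, (h₁' : G)⁻¹ * g * (h₂' : G), aux_mem_normalizer hxP,
      (h₂' : G)⁻¹, H.inv_mem h₂'.2, ?_⟩
    group
  · -- triple factorization → coprime subdegrees
    intro hfac β
    obtain ⟨g, hg⟩ := MulAction.exists_smul_eq G α β
    obtain ⟨h₁, hh₁, x, hx, h₂, hh₂, rfl⟩ := hfac g
    rw [hp.coprime_iff_not_dvd, Nat.card_coe_set_eq, ← MulAction.index_stabilizer]
    set h₁' : ↥H := ⟨h₁, hh₁⟩ with hh₁'
    have hle : ((h₁' • SylP : Sylow p ↥H) : Subgroup ↥H) ≤ MulAction.stabilizer ↥H β := by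
      rw [show ((h₁' • SylP : Sylow p ↥H) : Subgroup ↥H)
            = MulAut.conj h₁' • (SylP : Subgroup ↥H) from rfl, hSylP,
          Subgroup.conj_smul_subgroupOf hP.1]
      rintro ⟨u, huH⟩ hu
      rw [Subgroup.mem_subgroupOf] at hu
      obtain ⟨v, hv, hveq⟩ := Subgroup.mem_smul_pointwise_iff_exists _ _ _ |>.mp hu
      rw [MulAction.mem_stabilizer_iff, Subgroup.smul_def]
      show u • β = β
      have hu' : u = h₁ * v * h₁⁻¹ := hveq.symm
      have hvx : x⁻¹ * v * x ∈ P := by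
        have := (Subgroup.mem_normalizer_iff.mp ((Subgroup.normalizer (P : Set G)).inv_mem hx) v).mp hv
        rwa [inv_inv] at this
      rw [← hg, hu']
      have e1 : (h₁ * v * h₁⁻¹) * (h₁ * x * h₂) = (h₁ * x) * ((x⁻¹ * v * x) * h₂) := by
        group
      have e2 : h₁ * x * h₂ = (h₁ * x) * h₂ := by group
      have m1 : (x⁻¹ * v * x) * h₂ ∈ H := H.mul_mem (hP.1 hvx) hh₂
      rw [← mul_smul, e1, mul_smul, show ((x⁻¹ * v * x) * h₂) • α = α from m1,
        show (h₁ * x * h₂) • α = (h₁ * x) • (h₂ • α) from mul_smul _ _ _,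
        show h₂ • α = α from hh₂]
    have hdvd : (MulAction.stabilizer ↥H β).index
        ∣ ((h₁' • SylP : Sylow p ↥H) : Subgroup ↥H).index :=
      Subgroup.index_dvd_of_le hle
    intro hpd
    exact (h₁' • SylP : Sylow p ↥H).not_dvd_index (hpd.trans hdvd)
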